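/- On F̂_{n+1} the following operator identities hold (with scalar multiples of maps taken in Maps(F̂_{n+1}, F̂_{n+1})): d_s ∘ τ − τ ∘ d_s = ρ·id; Δ_j ∘ τ − τ ∘ Δ_j = [1]·τ for every 1 ≤ j ≤ n; and d_s ∘ Δ_j − Δ_j ∘ d_s = ρ·d_s for every 1 ≤ j ≤ n. -/

import Mathlib

/-!
Setting: `q = p ^ e`, `L` an algebraically closed field of characteristic `p`
containing `F_q(x)` (via the ring embedding `φ`), `root` the unique `q`-th root map
on `L`.  `CIdx n` indexes the basis monomials `e(m, k₁, …, k_n)` (with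
`m ≤ min(k₁, …, k_n)`) of the space `F̂_{n+1} = CIdx n →₀ L` of `F_q`-linear
polynomials; `tauOp`, `dsOp`, `deltaOp` are the operators `τ`, `d_s`, `Δ_j`, and
`monOp` is the monomial operator `τ^l ∘ d_s^μ ∘ Δ₁^{i₁} ∘ … ∘ Δ_n^{i_n}`.
-/

/-- Index set of the monomial basis `e(m, k₁, …, k_n)` with `m ≤ min(k₁, …, k_n)`. -/
def CIdx (n : ℕ) : Type := {v : ℕ × (Fin n → ℕ) // ∀ j, v.1 ≤ v.2 j}

/-- `(m, k⃗) ↦ (m+1, k⃗+1)`. -/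
def shiftUp {n : ℕ} (i : CIdx n) : CIdx n :=
  ⟨(i.1.1 + 1, fun j => i.1.2 j + 1), fun j => Nat.succ_le_succ (i.2 j)⟩

/-- `(m, k⃗) ↦ (m-1, k⃗-1)` (truncated subtraction). -/
def shiftDown {n : ℕ} (i : CIdx n) : CIdx n :=
  ⟨(i.1.1 - 1, fun j => i.1.2 j - 1), fun j => Nat.sub_le_sub_right (i.2 j) 1⟩

/-- The operator `τ` : `τ(a·e(m,k⃗)) = a^q · e(m+1, k⃗+1)`. -/
noncomputable def tauOp (L : Type) [Field L] (q n : ℕ) :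
    (CIdx n →₀ L) → (CIdx n →₀ L) :=
  fun f => f.sum fun i a => Finsupp.single (shiftUp i) (a ^ q)

/-- The Carlitz derivative `d_s` : `d_s(a·e(m,k⃗)) = a^{1/q}·[m]^{1/q}·e(m-1,k⃗-1)`
(which vanishes for `m = 0` since `[0] = x^{q^0} - x = 0` and `root 0 = 0`). -/
noncomputable def dsOp (L : Type) [Field L] (root : L → L) (x : L) (q n : ℕ) :
    (CIdx n →₀ L) → (CIdx n →₀ L) :=
  fun f => f.sum fun i a =>
    Finsupp.single (shiftDown i) (root (x ^ q ^ i.1.1 - x) * root a)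

/-- The operator `Δ_j` : `Δ_j(a·e(m,k⃗)) = [k_j]·a·e(m,k⃗)`. -/
noncomputable def deltaOp (L : Type) [Field L] (x : L) (q n : ℕ) (j : Fin n) :
    (CIdx n →₀ L) → (CIdx n →₀ L) :=
  fun f => f.sum fun i a => Finsupp.single i ((x ^ q ^ i.1.2 j - x) * a)

/-- The monomial operator `τ^l ∘ d_s^μ ∘ Δ₁^{i₁} ∘ … ∘ Δ_n^{i_n}`. -/
noncomputable def monOp (L : Type) [Field L] (root : L → L) (x : L) (q n : ℕ)
    (l μ : ℕ) (iv : Fin n → ℕ) : (CIdx n →₀ L) → (CIdx n →₀ L) :=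
  (tauOp L q n)^[l] ∘ (dsOp L root x q n)^[μ] ∘
    (List.ofFn fun j : Fin n => (deltaOp L x q n j)^[iv j]).foldr (· ∘ ·) id

/-- **Commutation relations in the Carlitz ring (relations (4) and (9)).**
With `ρ = [1]^{1/q}`: `d_s∘τ − τ∘d_s = ρ·id`, `Δ_j∘τ − τ∘Δ_j = [1]·τ`, and
`d_s∘Δ_j − Δ_j∘d_s = ρ·d_s` for every `j`. -/
theorem carlitz_commutation_relations
    (p e q : ℕ) [Fact p.Prime] (he : 0 < e) (hq : q = p ^ e)
    (L : Type) [Field L] [IsAlgClosed L] [CharP L p]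
    (φ : RatFunc (GaloisField p e) →+* L)
    (root : L → L) (hroot1 : ∀ c, root c ^ q = c) (hroot2 : ∀ c, root (c ^ q) = c)
    (n : ℕ) (x : L) (hx : x = φ RatFunc.X) :
    (dsOp L root x q n ∘ tauOp L q n - tauOp L q n ∘ dsOp L root x q n
        = root (x ^ q - x) • (id : (CIdx n →₀ L) → (CIdx n →₀ L))) ∧
    (∀ j : Fin n, deltaOp L x q n j ∘ tauOp L q n - tauOp L q n ∘ deltaOp L x q n j
        = (x ^ q - x) • tauOp L q n) ∧
    (∀ j : Fin n, dsOp L root x q n ∘ deltaOp L x q n j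
        - deltaOp L x q n j ∘ dsOp L root x q n
        = root (x ^ q - x) • dsOp L root x q n) := by
  have hq0 : q ≠ 0 := by
    rw [hq]; exact pow_ne_zero _ (Nat.Prime.ne_zero Fact.out)
  have hadd : ∀ a b : L, (a + b) ^ q = a ^ q + b ^ q := by
    intro a b; rw [hq]; exact add_pow_char_pow a b p e
  have hsub : ∀ a b : L, (a - b) ^ q = a ^ q - b ^ q := by
    intro a b; rw [hq]; exact sub_pow_char_pow a b e
  have hz : (0 : L) ^ q = 0 := zero_pow hq0
  have hinj : ∀ u v : L, u ^ q = v ^ q → u = v := by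
    intro u v h; rw [← hroot2 u, h, hroot2]
  have hrz : root 0 = 0 := by
    have := hroot2 (0 : L); rwa [hz] at this
  have hra : ∀ a b : L, root (a + b) = root a + root b := by
    intro a b
    apply hinj
    rw [hadd, hroot1, hroot1, hroot1]
  have hrm : ∀ a b : L, root (a * b) = root a * root b := by
    intro a b
    apply hinj
    rw [mul_pow, hroot1, hroot1, hroot1]
  -- the key arithmetic identity:  [m+1]^{1/q} = [m] + ρ
  have key : ∀ m : ℕ, root (x ^ q ^ (m + 1) - x) = (x ^ q ^ m - x) + root (x ^ q - x) := by
    intro m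
    apply hinj
    rw [hroot1, hadd, hsub, hroot1, ← pow_mul, ← pow_succ]
    ring
  -- index lemmas
  have sdu : ∀ i : CIdx n, shiftDown (shiftUp i) = i := by
    intro i
    apply Subtype.ext
    simp [shiftUp, shiftDown]
  have sud : ∀ i : CIdx n, 1 ≤ i.1.1 → shiftUp (shiftDown i) = i := by
    intro i hi
    apply Subtype.ext
    have h2 : ∀ j, 1 ≤ i.1.2 j := fun j => le_trans hi (i.2 j)
    simp only [shiftUp, shiftDown]
    exact Prod.ext (Nat.sub_add_cancel hi) (funext fun j => Nat.sub_add_cancel (h2 j))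
  -- values on singles
  have tau_s : ∀ (i : CIdx n) (a : L),
      tauOp L q n (Finsupp.single i a) = Finsupp.single (shiftUp i) (a ^ q) := by
    intro i a; exact Finsupp.sum_single_index (by rw [hz, Finsupp.single_zero])
  have ds_s : ∀ (i : CIdx n) (a : L),
      dsOp L root x q n (Finsupp.single i a)
        = Finsupp.single (shiftDown i) (root (x ^ q ^ i.1.1 - x) * root a) := by
    intro i a; exact Finsupp.sum_single_index (by rw [hrz, mul_zero, Finsupp.single_zero])
  have de_s : ∀ (j : Fin n) (i : CIdx n) (a : L),
      deltaOp L x q n j (Finsupp.single i a)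
        = Finsupp.single i ((x ^ q ^ i.1.2 j - x) * a) := by
    intro j i a; exact Finsupp.sum_single_index (by rw [mul_zero, Finsupp.single_zero])
  -- additivity and zero
  have tau_z : tauOp L q n 0 = 0 := Finsupp.sum_zero_index
  have ds_z : dsOp L root x q n 0 = 0 := Finsupp.sum_zero_index
  have de_z : ∀ j, deltaOp L x q n j 0 = 0 := fun j => Finsupp.sum_zero_index
  have tau_a : ∀ f g : CIdx n →₀ L, tauOp L q n (f + g) = tauOp L q n f + tauOp L q n g := by
    intro f g
    exact Finsupp.sum_add_index' (fun i => by rw [hz, Finsupp.single_zero])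
      (fun i b₁ b₂ => by rw [hadd, Finsupp.single_add])
  have ds_a : ∀ f g : CIdx n →₀ L,
      dsOp L root x q n (f + g) = dsOp L root x q n f + dsOp L root x q n g := by
    intro f g
    exact Finsupp.sum_add_index' (fun i => by rw [hrz, mul_zero, Finsupp.single_zero])
      (fun i b₁ b₂ => by rw [hra, mul_add, Finsupp.single_add])
  have de_a : ∀ (j : Fin n) (f g : CIdx n →₀ L),
      deltaOp L x q n j (f + g) = deltaOp L x q n j f + deltaOp L x q n j g := by
    intro j f g
    exact Finsupp.sum_add_index' (fun i => by rw [mul_zero, Finsupp.single_zero])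
      (fun i b₁ b₂ => by rw [mul_add, Finsupp.single_add])
  refine ⟨?_, ?_, ?_⟩
  · -- relation 1 : d_s ∘ τ − τ ∘ d_s = ρ • id
    have hs : ∀ (i : CIdx n) (a : L),
        dsOp L root x q n (tauOp L q n (Finsupp.single i a))
          - tauOp L q n (dsOp L root x q n (Finsupp.single i a))
          = root (x ^ q - x) • Finsupp.single i a := by
      intro i a
      rw [tau_s, ds_s, ds_s, tau_s, sdu, hroot2, mul_pow,
        hroot1 (x ^ q ^ i.1.1 - x), hroot1 a, Finsupp.smul_single, smul_eq_mul]
      have hsu : (shiftUp i).1.1 = i.1.1 + 1 := rfl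
      rcases Nat.eq_zero_or_pos i.1.1 with hm | hm
      · have h0' : x ^ q ^ i.1.1 - x = 0 := by rw [hm, pow_zero, pow_one, sub_self]
        rw [h0', zero_mul, Finsupp.single_zero, sub_zero, hsu, hm, key,
          pow_zero, pow_one, sub_self, zero_add]
      · rw [sud i hm, hsu, ← Finsupp.single_sub]
        congr 1
        rw [key]
        ring
    funext f
    simp only [Pi.sub_apply, Function.comp_apply, Pi.smul_apply, id_eq]
    induction f using Finsupp.induction with
    | zero => simp only [tau_z, ds_z, smul_zero, sub_zero]
    | single_add i a g hig ha0 ih =>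
      simp only [tau_a, ds_a, smul_add]
      rw [← ih, ← hs i a]; abel
  · -- relation 2 : Δ_j ∘ τ − τ ∘ Δ_j = [1] • τ
    intro j
    have hs : ∀ (i : CIdx n) (a : L),
        deltaOp L x q n j (tauOp L q n (Finsupp.single i a))
          - tauOp L q n (deltaOp L x q n j (Finsupp.single i a))
          = (x ^ q - x) • tauOp L q n (Finsupp.single i a) := by
      intro i a
      rw [tau_s, de_s, de_s, tau_s, Finsupp.smul_single, smul_eq_mul]
      have h1 : (shiftUp i).1.2 j = i.1.2 j + 1 := rfl
      rw [h1, ← Finsupp.single_sub]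
      congr 1
      rw [mul_pow, hsub, ← pow_mul, ← pow_succ]
      ring
    funext f
    simp only [Pi.sub_apply, Function.comp_apply, Pi.smul_apply]
    induction f using Finsupp.induction with
    | zero => simp only [tau_z, de_z, smul_zero, sub_zero]
    | single_add i a g hig ha0 ih =>
      simp only [tau_a, de_a, smul_add]
      rw [← ih, ← hs i a]; abel
  · -- relation 3 : d_s ∘ Δ_j − Δ_j ∘ d_s = ρ • d_s
    intro j
    have hs : ∀ (i : CIdx n) (a : L),
        dsOp L root x q n (deltaOp L x q n j (Finsupp.single i a))
          - deltaOp L x q n j (dsOp L root x q n (Finsupp.single i a))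
          = root (x ^ q - x) • dsOp L root x q n (Finsupp.single i a) := by
      intro i a
      rw [de_s, ds_s, ds_s, de_s, Finsupp.smul_single, smul_eq_mul, hrm]
      have h1 : (shiftDown i).1.2 j = i.1.2 j - 1 := rfl
      rw [h1, ← Finsupp.single_sub]
      congr 1
      rcases Nat.eq_zero_or_pos (i.1.2 j) with hk | hk
      · have hm : i.1.1 = 0 := Nat.le_antisymm (hk ▸ i.2 j) (Nat.zero_le _)
        have h0' : root (x ^ q ^ i.1.1 - x) = 0 := by
          rw [hm, pow_zero, pow_one, sub_self, hrz]
        rw [h0']; ring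
      · have h2 : i.1.2 j - 1 + 1 = i.1.2 j := Nat.sub_add_cancel hk
        have h3 : root (x ^ q ^ i.1.2 j - x)
            = (x ^ q ^ (i.1.2 j - 1) - x) + root (x ^ q - x) := by
          rw [← h2, key, h2]
        rw [h3]; ring
    funext f
    simp only [Pi.sub_apply, Function.comp_apply, Pi.smul_apply]
    induction f using Finsupp.induction with
    | zero => simp only [ds_z, de_z, smul_zero, sub_zero]
    | single_add i a g hig ha0 ih =>
      simp only [ds_a, de_a, smul_add]
      rw [← ih, ← hs i a]; abel
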